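/- Let R(x) = ‖x‖₁ and A ∈ ℝ^{m×n}, with X = ℝⁿ and Y = ℝ^m. Suppose ‖b_δ − b̂‖₂ ≤ δ, the set X̂ of ℓ¹-norm-minimising solutions of Ax = b̂ is nonempty, and the approximate solutions x_δ satisfy [J_δ + α_δ R](x_δ) − [J_δ + α_δ R](x̂) ≤ e_δ for x̂ ∈ X̂, where J_δ(x) := (1/2)‖Ax − b_δ‖₂². If (α_δ, δ²/α_δ, e_δ/α_δ) → 0 as δ ↘ 0, then dist(x_δ, X̂) → 0 as δ ↘ 0. -/

import Mathlib

open Filter Topology Metric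

lemma euclid_norm_le_sum_abs {n : ℕ} (z : EuclideanSpace ℝ (Fin n)) :
    ‖z‖ ≤ ∑ k, |z k| := by
  rw [EuclideanSpace.norm_eq]
  have h1 : ∑ i, ‖z i‖ ^ 2 ≤ (∑ i, ‖z i‖) ^ 2 :=
    Finset.sum_sq_le_sq_sum_of_nonneg (fun i _ => norm_nonneg _)
  calc Real.sqrt (∑ i, ‖z i‖ ^ 2) ≤ Real.sqrt ((∑ i, ‖z i‖) ^ 2) := Real.sqrt_le_sqrt h1
    _ = ∑ i, ‖z i‖ := Real.sqrt_sq (Finset.sum_nonneg fun i _ => norm_nonneg _)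
    _ = ∑ k, |z k| := by simp [Real.norm_eq_abs]

set_option maxHeartbeats 1600000 in
/-- **Convergence of ℓ¹-regularised regression (Lasso) to the set of
ℓ¹-minimising solutions** (Theorem `thm:lasso:main`).  Let `A : ℝⁿ → ℝᵐ` be
linear, `X̂` the (nonempty) set of ℓ¹-norm-minimising solutions of `Az = b̂`,
and suppose `‖b_δ - b̂‖₂ ≤ δ` and that the approximate solutions `x_δ`
minimise `J_δ + α_δ‖·‖₁`, `J_δ(z) = ½‖Az - b_δ‖₂²`, to accuracy `e_δ`
relative to `X̂`.  If `(α_δ, δ²/α_δ, e_δ/α_δ) → 0` as `δ ↘ 0`, then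
`dist(x_δ, X̂) → 0` as `δ ↘ 0`. -/
theorem lasso_convergence
    {m n : ℕ}
    (A : EuclideanSpace ℝ (Fin n) →L[ℝ] EuclideanSpace ℝ (Fin m))
    (bhat : EuclideanSpace ℝ (Fin m))
    (Xhat : Set (EuclideanSpace ℝ (Fin n)))
    (hXhat : Xhat = {z : EuclideanSpace ℝ (Fin n) | A z = bhat ∧
      ∀ v : EuclideanSpace ℝ (Fin n), A v = bhat →
        ∑ k, |z k| ≤ ∑ k, |v k|})
    (hne : Xhat.Nonempty)
    (b : ℝ → EuclideanSpace ℝ (Fin m))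
    (hb : ∀ δ : ℝ, 0 < δ → ‖b δ - bhat‖ ≤ δ)
    (α e : ℝ → ℝ) (hα : ∀ δ : ℝ, 0 < δ → 0 < α δ) (he : ∀ δ : ℝ, 0 < δ → 0 ≤ e δ)
    (x : ℝ → EuclideanSpace ℝ (Fin n))
    (hacc : ∀ δ : ℝ, 0 < δ → ∀ xh ∈ Xhat,
      2⁻¹ * ‖A (x δ) - b δ‖ ^ 2 + α δ * ∑ k, |x δ k|
        ≤ 2⁻¹ * ‖A xh - b δ‖ ^ 2 + α δ * ∑ k, |xh k| + e δ)
    (hlim1 : Tendsto α (nhdsWithin 0 (Set.Ioi 0)) (nhds 0))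
    (hlim2 : Tendsto (fun δ => δ ^ 2 / α δ) (nhdsWithin 0 (Set.Ioi 0)) (nhds 0))
    (hlim3 : Tendsto (fun δ => e δ / α δ) (nhdsWithin 0 (Set.Ioi 0)) (nhds 0)) :
    Tendsto (fun δ => infDist (x δ) Xhat) (nhdsWithin 0 (Set.Ioi 0)) (nhds 0) := by
  obtain ⟨xh, hxhmem⟩ := hne
  have hxh' : A xh = bhat ∧ ∀ v, A v = bhat → ∑ k, |xh k| ≤ ∑ k, |v k| := by
    rw [hXhat] at hxhmem; exact hxhmem
  obtain ⟨hAxh, hmin⟩ := hxh'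
  set Rh : ℝ := ∑ k, |xh k| with hRhdef
  -- key a priori bounds
  have key : ∀ δ : ℝ, 0 < δ →
      (∑ k, |x δ k|) ≤ Rh + ((δ ^ 2 / α δ) / 2 + e δ / α δ) ∧
      ‖A (x δ) - b δ‖ ^ 2 ≤ δ ^ 2 + 2 * (α δ * Rh) + 2 * e δ := by
    intro δ hδ
    have h0 := hacc δ hδ xh hxhmem
    have hαpos := hα δ hδ
    have hAb : ‖A xh - b δ‖ ≤ δ := by
      rw [hAxh, ← norm_neg]; simpa using hb δ hδ
    have hAb2 : ‖A xh - b δ‖ ^ 2 ≤ δ ^ 2 := pow_le_pow_left₀ (norm_nonneg _) hAb 2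
    have hsq : (0:ℝ) ≤ ‖A (x δ) - b δ‖ ^ 2 := sq_nonneg _
    have hRx : (0:ℝ) ≤ ∑ k, |x δ k| := Finset.sum_nonneg fun k _ => abs_nonneg _
    constructor
    · rw [← mul_le_mul_iff_right₀ hαpos]
      have heq : α δ * (Rh + (δ ^ 2 / α δ / 2 + e δ / α δ))
          = α δ * Rh + 2⁻¹ * δ ^ 2 + e δ := by
        field_simp; ring
      rw [heq]; nlinarith
    · nlinarith [mul_nonneg hαpos.le hRx]
  -- contradiction setup
  by_contra hcon
  rw [Metric.tendsto_nhds] at hcon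
  push_neg at hcon
  obtain ⟨ε, hε, hfreq⟩ := hcon
  have hfreq' : ∃ᶠ δ in 𝓝[>] (0:ℝ), 0 < δ ∧ ε ≤ infDist (x δ) Xhat := by
    refine (hfreq.and_eventually self_mem_nhdsWithin).mono ?_
    rintro δ ⟨h1, h2⟩
    refine ⟨h2, ?_⟩
    rw [Real.dist_eq, sub_zero, abs_of_nonneg infDist_nonneg] at h1
    exact h1
  obtain ⟨u, hu_l, hu⟩ := Filter.exists_seq_forall_of_frequently hfreq'
  have hupos : ∀ j, 0 < u j := fun j => (hu j).1
  have huε : ∀ j, ε ≤ infDist (x (u j)) Xhat := fun j => (hu j).2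
  have hu0 : Tendsto u atTop (𝓝 0) := hu_l.mono_right nhdsWithin_le_nhds
  have hα0 : Tendsto (fun j => α (u j)) atTop (𝓝 0) := hlim1.comp hu_l
  have hd2 : Tendsto (fun j => (u j) ^ 2 / α (u j)) atTop (𝓝 0) := hlim2.comp hu_l
  have he2 : Tendsto (fun j => e (u j) / α (u j)) atTop (𝓝 0) := hlim3.comp hu_l
  have he0 : Tendsto (fun j => e (u j)) atTop (𝓝 0) := by
    have h := he2.mul hα0
    rw [zero_mul] at h
    refine h.congr fun j => ?_
    exact div_mul_cancel₀ _ (hα (u j) (hupos j)).ne'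
  have ht : Tendsto (fun j => (u j) ^ 2 / α (u j) / 2 + e (u j) / α (u j)) atTop (𝓝 0) := by
    have := (hd2.div_const 2).add he2
    simpa using this
  have hev : ∀ᶠ j in atTop, ‖x (u j)‖ ≤ Rh + 1 := by
    filter_upwards [ht.eventually (eventually_le_nhds (by norm_num : (0:ℝ) < 1))] with j hj
    have h1 := (key (u j) (hupos j)).1
    have h2 := euclid_norm_le_sum_abs (x (u j))
    linarith
  rw [eventually_atTop] at hev
  obtain ⟨N, hN⟩ := hev
  have hcm : IsCompact (closedBall (0 : EuclideanSpace ℝ (Fin n)) (Rh + 1)) :=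
    isCompact_closedBall _ _
  obtain ⟨xs, hxs_mem, φ, hφ, hconv⟩ := hcm.tendsto_subseq
    (x := fun j => x (u (j + N)))
    (fun j => by simpa [mem_closedBall, dist_zero_right] using hN (j + N) (by omega))
  set ψ : ℕ → ℕ := fun j => φ j + N with hψdef
  have hψ : Tendsto ψ atTop atTop :=
    tendsto_atTop_mono (fun j => (hφ.id_le j).trans (Nat.le_add_right _ _)) tendsto_id
  have hconv' : Tendsto (fun j => x (u (ψ j))) atTop (𝓝 xs) := hconv
  -- limits along the subsequence
  have hq : Tendsto (fun j => ‖A (x (u (ψ j))) - b (u (ψ j))‖ ^ 2) atTop (𝓝 0) := by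
    refine squeeze_zero (fun j => sq_nonneg _) (fun j => (key _ (hupos (ψ j))).2) ?_
    have h1 : Tendsto (fun j => (u (ψ j)) ^ 2) atTop (𝓝 0) := by
      have := ((hu0.comp hψ).pow 2); simpa using this
    have h2 : Tendsto (fun j => 2 * (α (u (ψ j)) * Rh)) atTop (𝓝 0) := by
      have := ((hα0.comp hψ).mul_const Rh).const_mul 2; simpa using this
    have h3 : Tendsto (fun j => 2 * e (u (ψ j))) atTop (𝓝 0) := by
      have := (he0.comp hψ).const_mul 2; simpa using this
    have := (h1.add h2).add h3
    simpa using this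
  have hq' : Tendsto (fun j => ‖A (x (u (ψ j))) - b (u (ψ j))‖) atTop (𝓝 0) := by
    have h := hq.sqrt
    rw [Real.sqrt_zero] at h
    refine h.congr fun j => ?_
    exact Real.sqrt_sq (norm_nonneg _)
  have hbs : Tendsto (fun j => b (u (ψ j))) atTop (𝓝 bhat) := by
    rw [tendsto_iff_norm_sub_tendsto_zero]
    exact squeeze_zero (fun j => norm_nonneg _) (fun j => hb _ (hupos (ψ j))) (hu0.comp hψ)
  have hdiff : Tendsto (fun j => A (x (u (ψ j))) - b (u (ψ j))) atTop (𝓝 0) :=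
    tendsto_zero_iff_norm_tendsto_zero.mpr hq'
  have hAto : Tendsto (fun j => A (x (u (ψ j)))) atTop (𝓝 bhat) := by
    have := hdiff.add hbs
    simpa using this
  have hAconv : Tendsto (fun j => A (x (u (ψ j)))) atTop (𝓝 (A xs)) :=
    (A.continuous.tendsto xs).comp hconv'
  have hAxs : A xs = bhat := tendsto_nhds_unique hAconv hAto
  -- lower semicontinuity step (here: continuity of the ℓ¹ norm)
  have hRcont : Continuous (fun z : EuclideanSpace ℝ (Fin n) => ∑ k, |z k|) := by
    refine continuous_finset_sum _ fun k _ => ?_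
    exact continuous_abs.comp (EuclideanSpace.proj k).continuous
  have hRconv : Tendsto (fun j => ∑ k, |x (u (ψ j)) k|) atTop (𝓝 (∑ k, |xs k|)) :=
    (hRcont.tendsto xs).comp hconv'
  have hRle : (∑ k, |xs k|) ≤ Rh := by
    have hb2 : Tendsto (fun j => Rh + ((u (ψ j)) ^ 2 / α (u (ψ j)) / 2
        + e (u (ψ j)) / α (u (ψ j)))) atTop (𝓝 Rh) := by
      have h := (ht.comp hψ).const_add Rh
      simpa using h
    exact le_of_tendsto_of_tendsto' hRconv hb2 (fun j => (key _ (hupos (ψ j))).1)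
  have hxs_in : xs ∈ Xhat := by
    rw [hXhat]
    exact ⟨hAxs, fun v hv => hRle.trans (hmin v hv)⟩
  have hfin : ε ≤ infDist xs Xhat :=
    ge_of_tendsto (((continuous_infDist_pt Xhat).tendsto xs).comp hconv')
      (Eventually.of_forall fun j => huε (ψ j))
  rw [infDist_zero_of_mem hxs_in] at hfin
  linarith
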